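/- If c₁ satisfies 2Nc₁ > 2α_max/(l_j − l_i) for all pairs of distinct integer delays l_i < l_j, and 2Nc₁ is an integer, then for any two paths i ≠ j with (l_i, α_i) ≠ (l_j, α_j), where |α_i|, |α_j| ≤ α_max, and with 2α_max l_max + 2α_max + l_max < N, the path locations loc_i = (α_i + 2Nc₁ l_i) mod N and loc_j = (α_j + 2Nc₁ l_j) mod N are distinct. -/
import Mathlib


/-- With `2Nc₁ = 2α_max + 1` and `2α_max l_max + 2α_max + l_max < N`,
the map `(l, α) ↦ (α + (2α_max+1)l) mod N` is injective on
`{0,…,l_max} × {−α_max,…,α_max}`; distinct paths get distinct locations. -/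
theorem afdm_locations_distinct (N αmax lmax : ℕ)
    (hN : 2 * αmax * lmax + 2 * αmax + lmax < N)
    (l₁ l₂ : ℕ) (hl₁ : l₁ ≤ lmax) (hl₂ : l₂ ≤ lmax)
    (α₁ α₂ : ℤ) (hα₁ : |α₁| ≤ (αmax : ℤ)) (hα₂ : |α₂| ≤ (αmax : ℤ))
    (hne : ((l₁ : ℤ), α₁) ≠ ((l₂ : ℤ), α₂)) :
    (α₁ + (2 * (αmax : ℤ) + 1) * (l₁ : ℤ)) % (N : ℤ) ≠
      (α₂ + (2 * (αmax : ℤ) + 1) * (l₂ : ℤ)) % (N : ℤ) := by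
  intro h
  have hNZ : (N : ℤ) ∣ ((α₂ + (2 * (αmax : ℤ) + 1) * l₂) - (α₁ + (2 * (αmax : ℤ) + 1) * l₁)) :=
    Int.ModEq.dvd h
  have habs₁ := abs_le.mp hα₁
  have habs₂ := abs_le.mp hα₂
  have hl₁' : (l₁ : ℤ) ≤ (lmax : ℤ) := by exact_mod_cast hl₁
  have hl₂' : (l₂ : ℤ) ≤ (lmax : ℤ) := by exact_mod_cast hl₂
  have hl₁0 : (0 : ℤ) ≤ l₁ := Int.natCast_nonneg _
  have hl₂0 : (0 : ℤ) ≤ l₂ := Int.natCast_nonneg _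
  have hN' : 2 * (αmax : ℤ) * lmax + 2 * αmax + lmax < (N : ℤ) := by exact_mod_cast hN
  have hbound : |((α₂ + (2 * (αmax : ℤ) + 1) * l₂) - (α₁ + (2 * (αmax : ℤ) + 1) * l₁))| < (N : ℤ) := by
    rw [abs_lt]
    constructor <;> nlinarith [Int.natCast_nonneg αmax]
  have hzero : (α₂ + (2 * (αmax : ℤ) + 1) * l₂) - (α₁ + (2 * (αmax : ℤ) + 1) * l₁) = 0 := by
    rcases hNZ with ⟨k, hk⟩
    rw [hk] at hbound ⊢
    rw [abs_lt] at hbound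
    have : k = 0 := by nlinarith [Int.natCast_nonneg N]
    simp [this]
  have hll : (l₁ : ℤ) = l₂ := by
    rcases lt_trichotomy (l₁ : ℤ) l₂ with hlt | heq | hgt
    · exfalso
      have h1 : (2*(αmax:ℤ)+1) * 1 ≤ (2*(αmax:ℤ)+1) * (l₂ - l₁) :=
        mul_le_mul_of_nonneg_left (by omega) (by positivity)
      have h2 : (2*(αmax:ℤ)+1) * (l₂ - l₁) = α₁ - α₂ := by ring_nf; ring_nf at hzero; linarith
      linarith
    · exact heq
    · exfalso
      have h1 : (2*(αmax:ℤ)+1) * 1 ≤ (2*(αmax:ℤ)+1) * (l₁ - l₂) :=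
        mul_le_mul_of_nonneg_left (by omega) (by positivity)
      have h2 : (2*(αmax:ℤ)+1) * (l₁ - l₂) = α₂ - α₁ := by ring_nf; ring_nf at hzero; linarith
      linarith
  rw [hll] at hzero
  have hαα : α₁ = α₂ := by linarith
  exact hne (by rw [hll, hαα])
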